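/- For α ∈ (0,1), the quantity P(j ∈ R) := (Γ(j-1+α)/(Γ(α)Γ(j-1))) ∫_0^1 x^{j-1} (1-α)/(1-(1-x)^{1-α}) dx satisfies P(j ∈ R) ~ ((1-α)/Γ(α)) · j^{α-1} as j → ∞. -/

import Mathlib

open Real Filter MeasureTheory

section Aux
open Set


lemma aux_div (c d : ℝ) : Tendsto (fun j : ℕ => ((j:ℝ)+c)/((j:ℝ)+d)) atTop (nhds 1) := by
  have h0 : Tendsto (fun j : ℕ => (c-d)/((j:ℝ)+d)) atTop (nhds 0) :=
    tendsto_const_nhds.div_atTop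
      (tendsto_atTop_add_const_right _ d tendsto_natCast_atTop_atTop)
  have h1 : Tendsto (fun j : ℕ => 1 + (c-d)/((j:ℝ)+d)) atTop (nhds 1) := by
    simpa using tendsto_const_nhds.add h0
  refine h1.congr' ?_
  filter_upwards [eventually_gt_atTop (Nat.ceil (max 0 (-d)))] with j hj
  have hd : 0 < (j:ℝ) + d := by
    have : (max 0 (-d)) < (j:ℝ) := by
      calc max 0 (-d) ≤ (Nat.ceil (max 0 (-d)) : ℝ) := Nat.le_ceil _
      _ < j := by exact_mod_cast hj
    have := lt_of_le_of_lt (le_max_right 0 (-d)) this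
    linarith
  field_simp
  ring

lemma wendel_upper {α x : ℝ} (hα : α ∈ Set.Ioo (0:ℝ) 1) (hx : 0 < x) :
    Real.Gamma (x + α) ≤ Real.Gamma x * x ^ α := by
  obtain ⟨hα0, hα1⟩ := hα
  have hc := Real.convexOn_log_Gamma.2 (mem_Ioi.mpr hx) (mem_Ioi.mpr (by linarith : (0:ℝ) < x + 1))
    (by linarith : (0:ℝ) ≤ 1 - α) hα0.le (by ring)
  simp only [smul_eq_mul, Function.comp_apply] at hc
  have hxα : (1-α) * x + α * (x+1) = x + α := by ring
  rw [hxα] at hc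
  have hΓx : 0 < Real.Gamma x := Real.Gamma_pos_of_pos hx
  have hΓxα : 0 < Real.Gamma (x + α) := Real.Gamma_pos_of_pos (by linarith)
  rw [Real.Gamma_add_one hx.ne'] at hc
  rw [Real.log_mul hx.ne' hΓx.ne'] at hc
  have := Real.exp_le_exp.mpr hc
  rw [Real.exp_log hΓxα] at this
  calc Real.Gamma (x + α) ≤ Real.exp ((1-α) * Real.log (Real.Gamma x)
        + α * (Real.log x + Real.log (Real.Gamma x))) := this
  _ = Real.Gamma x * x ^ α := by
      rw [show (1-α) * Real.log (Real.Gamma x) + α * (Real.log x + Real.log (Real.Gamma x))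
          = Real.log (Real.Gamma x) + Real.log x * α by ring, Real.exp_add, Real.exp_log hΓx,
        Real.rpow_def_of_pos hx]

lemma wendel_lower {α x : ℝ} (hα : α ∈ Set.Ioo (0:ℝ) 1) (hx : 0 < x) :
    x * Real.Gamma x ≤ Real.Gamma (x + α) * (x + α) ^ (1 - α) := by
  obtain ⟨hα0, hα1⟩ := hα
  have hxα : 0 < x + α := by linarith
  have hc := Real.convexOn_log_Gamma.2 (mem_Ioi.mpr hxα)
    (mem_Ioi.mpr (by linarith : (0:ℝ) < x + α + 1)) hα0.le (by linarith : (0:ℝ) ≤ 1 - α) (by ring)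
  simp only [smul_eq_mul, Function.comp_apply] at hc
  have h1 : α * (x+α) + (1-α) * (x+α+1) = x + 1 := by ring
  rw [h1] at hc
  have hΓ : 0 < Real.Gamma (x + α) := Real.Gamma_pos_of_pos hxα
  have hΓ1 : 0 < Real.Gamma (x + 1) := Real.Gamma_pos_of_pos (by linarith)
  rw [Real.Gamma_add_one hxα.ne', Real.log_mul hxα.ne' hΓ.ne'] at hc
  have := Real.exp_le_exp.mpr hc
  rw [Real.exp_log hΓ1, Real.Gamma_add_one hx.ne'] at this
  calc x * Real.Gamma x ≤ Real.exp (α * Real.log (Real.Gamma (x+α))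
        + (1-α) * (Real.log (x+α) + Real.log (Real.Gamma (x+α)))) := this
  _ = Real.Gamma (x + α) * (x + α) ^ (1 - α) := by
      rw [show α * Real.log (Real.Gamma (x+α)) + (1-α) * (Real.log (x+α) + Real.log (Real.Gamma (x+α)))
          = Real.log (Real.Gamma (x+α)) + Real.log (x+α) * (1-α) by ring, Real.exp_add,
        Real.exp_log hΓ, Real.rpow_def_of_pos hxα]

lemma gamma_ratio {α : ℝ} (hα : α ∈ Set.Ioo (0:ℝ) 1) :
    Tendsto (fun j : ℕ => Real.Gamma ((j:ℝ)-1+α) / (Real.Gamma ((j:ℝ)-1) * (j:ℝ)^α))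
      atTop (nhds 1) := by
  obtain ⟨hα0, hα1⟩ := hα
  have hcont : ContinuousAt (fun t : ℝ => t ^ α) 1 :=
    Real.continuousAt_rpow_const 1 α (Or.inl one_ne_zero)
  have hup : Tendsto (fun j : ℕ => (((j:ℝ)-1)/(j:ℝ))^α) atTop (nhds 1) := by
    have h := hcont.tendsto.comp (aux_div (-1) 0)
    simp only [Function.comp_def, add_zero, Real.one_rpow] at h
    exact h.congr (fun j => by rw [← sub_eq_add_neg])
  have hlow : Tendsto (fun j : ℕ =>
      (((j:ℝ)-1)/((j:ℝ)-1+α)) * ((((j:ℝ)-1+α))/(j:ℝ))^α) atTop (nhds 1) := by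
    have h1 := aux_div (-1) (-1+α)
    have h2 := hcont.tendsto.comp (aux_div (-1+α) 0)
    simp only [Function.comp_def, add_zero, Real.one_rpow] at h2
    have := h1.mul h2
    rw [one_mul] at this
    exact this.congr (fun j => by
      rw [show (j:ℝ)+(-1+α) = (j:ℝ)-1+α from by ring, ← sub_eq_add_neg])
  refine tendsto_of_tendsto_of_tendsto_of_le_of_le' hlow hup ?_ ?_
  · filter_upwards [eventually_ge_atTop 2] with j hj
    have hx : (0:ℝ) < (j:ℝ) - 1 := by
      have : (2:ℝ) ≤ (j:ℝ) := by exact_mod_cast hj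
      linarith
    set x := (j:ℝ) - 1 with hxdef
    have hjpos : (0:ℝ) < (j:ℝ) := by linarith [hx]
    have hxα : 0 < x + α := by linarith
    have hΓx : 0 < Real.Gamma x := Real.Gamma_pos_of_pos hx
    have hjα : 0 < (j:ℝ)^α := Real.rpow_pos_of_pos hjpos α
    -- low j = x*(x+α)^(α-1)/j^α
    have hlowval : (x/(x+α)) * ((x+α)/(j:ℝ))^α = x * (x+α)^(α-1) / (j:ℝ)^α := by
      rw [Real.div_rpow hxα.le hjpos.le, Real.rpow_sub hxα, Real.rpow_one]
      field_simp
    rw [hlowval]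
    have key := mul_le_mul_of_nonneg_right (wendel_lower ⟨hα0, hα1⟩ hx)
      (Real.rpow_nonneg hxα.le (α-1))
    rw [mul_assoc (Real.Gamma (x+α)), ← Real.rpow_add hxα] at key
    norm_num at key
    have key2 : x * (x+α)^(α-1) ≤ Real.Gamma (x+α) / Real.Gamma x := by
      rw [le_div_iff₀ hΓx]
      calc x * (x+α)^(α-1) * Real.Gamma x = x * Real.Gamma x * (x+α)^(α-1) := by ring
      _ ≤ Real.Gamma (x+α) := key
    rw [← div_div]
    gcongr
  · filter_upwards [eventually_ge_atTop 2] with j hj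
    have hx : (0:ℝ) < (j:ℝ) - 1 := by
      have : (2:ℝ) ≤ (j:ℝ) := by exact_mod_cast hj
      linarith
    set x := (j:ℝ) - 1 with hxdef
    have hjpos : (0:ℝ) < (j:ℝ) := by linarith [hx]
    have hΓx : 0 < Real.Gamma x := Real.Gamma_pos_of_pos hx
    have hjα : 0 < (j:ℝ)^α := Real.rpow_pos_of_pos hjpos α
    have key : Real.Gamma (x+α) / Real.Gamma x ≤ x ^ α := by
      rw [div_le_iff₀ hΓx, mul_comm]
      exact wendel_upper ⟨hα0, hα1⟩ hx
    rw [Real.div_rpow hx.le hjpos.le, ← div_div]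
    gcongr


noncomputable def gfun (α : ℝ) : ℝ → ℝ := fun x => x * (1-α) / (1 - (1-x)^(1-α))

lemma g_denom_pos {α : ℝ} (hα : α ∈ Set.Ioo (0:ℝ) 1) {x : ℝ} (hx : x ∈ Set.Ioo (0:ℝ) 1) :
    (1-α) * x ≤ 1 - (1-x)^(1-α) := by
  obtain ⟨hα0, hα1⟩ := hα
  obtain ⟨hx0, hx1⟩ := hx
  have hb := rpow_one_add_le_one_add_mul_self (s := -x) (by linarith) (p := 1-α)
    (by linarith) (by linarith)
  rw [show (1:ℝ) + -x = 1 - x by ring] at hb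
  nlinarith

lemma g_bounds {α : ℝ} (hα : α ∈ Set.Ioo (0:ℝ) 1) {x : ℝ} (hx : x ∈ Set.Ioo (0:ℝ) 1) :
    gfun α x ∈ Set.Icc (0:ℝ) 1 := by
  obtain ⟨hα0, hα1⟩ := hα
  obtain ⟨hx0, hx1⟩ := hx
  have hd := g_denom_pos ⟨hα0, hα1⟩ ⟨hx0, hx1⟩
  have hdpos : 0 < 1 - (1-x)^(1-α) := lt_of_lt_of_le (by nlinarith) hd
  constructor
  · exact div_nonneg (by nlinarith) hdpos.le
  · rw [gfun, div_le_one hdpos]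
    nlinarith

lemma g_meas {α : ℝ} (hα : α ∈ Set.Ioo (0:ℝ) 1) : Measurable (gfun α) := by
  unfold gfun
  have hc : Continuous (fun x : ℝ => (1-x)^(1-α)) :=
    (Real.continuous_rpow_const (by linarith [hα.2])).comp (continuous_const.sub continuous_id)
  exact (measurable_id.mul measurable_const).div (measurable_const.sub hc.measurable)

lemma g_one {α : ℝ} (hα : α ∈ Set.Ioo (0:ℝ) 1) : gfun α 1 = 1 - α := by
  have h1 : (1:ℝ) - α ≠ 0 := sub_ne_zero.mpr (ne_of_gt (by linarith [hα.2]))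
  simp [gfun, Real.zero_rpow h1]

lemma g_cont {α : ℝ} (hα : α ∈ Set.Ioo (0:ℝ) 1) : ContinuousAt (gfun α) 1 := by
  have hα1 := hα.2
  have hrp : ContinuousAt (fun y : ℝ => y ^ (1-α)) ((fun x : ℝ => 1 - x) 1) := by
    simp only [sub_self]
    exact Real.continuousAt_rpow_const 0 (1-α) (Or.inr (by linarith))
  have hin : ContinuousAt (fun x : ℝ => (1-x)^(1-α)) 1 :=
    hrp.comp ((continuous_const.sub continuous_id).continuousAt)
  apply ContinuousAt.div
  · exact (continuous_id.mul continuous_const).continuousAt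
  · exact continuousAt_const.sub hin
  · have h1 : (1:ℝ) - α ≠ 0 := sub_ne_zero.mpr (ne_of_gt (by linarith))
    show (1:ℝ) - (1 - 1)^(1-α) ≠ 0
    rw [sub_self, Real.zero_rpow h1]
    norm_num

lemma subst_eq {α : ℝ} (n : ℕ) :
    ((n:ℝ)+1) * ∫ x in Set.Ioo (0:ℝ) 1, x^n * gfun α x
      = ∫ x in Set.Ioo (0:ℝ) 1, gfun α (x ^ (((n:ℝ)+1)⁻¹)) := by
  set p : ℝ := ((n:ℝ)+1)⁻¹ with hpdef
  have hn1 : (0:ℝ) < (n:ℝ)+1 := by positivity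
  have hppos : 0 < p := by positivity
  have hp : p ≠ 0 := hppos.ne'
  have hpn : p * ((n:ℝ)+1) = 1 := inv_mul_cancel₀ hn1.ne'
  set f : ℝ → ℝ := (Set.Ioo (0:ℝ) 1).indicator (fun y => y^n * gfun α y) with hfdef
  have h := integral_comp_rpow_Ioi f hp
  have hL : (∫ x in Ioi (0:ℝ), (|p| * x ^ (p - 1)) • f (x ^ p))
      = ∫ x in Ioi (0:ℝ), (Set.Ioo (0:ℝ) 1).indicator (fun x => p * gfun α (x ^ p)) x := by
    apply setIntegral_congr_fun measurableSet_Ioi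
    intro x hx
    simp only [smul_eq_mul]
    by_cases hx1 : x < 1
    · have hxm : x ∈ Set.Ioo (0:ℝ) 1 := ⟨hx, hx1⟩
      have hxp : x ^ p ∈ Set.Ioo (0:ℝ) 1 :=
        ⟨Real.rpow_pos_of_pos hx p, Real.rpow_lt_one (le_of_lt hx) hx1 hppos⟩
      rw [hfdef, Set.indicator_of_mem hxp, Set.indicator_of_mem hxm]
      have hxpow : x ^ (p-1) * (x ^ p) ^ n = 1 := by
        rw [← Real.rpow_natCast (x ^ p) n, ← Real.rpow_mul (le_of_lt hx),
          ← Real.rpow_add hx]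
        rw [show p - 1 + p * (n:ℝ) = p * ((n:ℝ)+1) - 1 by ring, hpn]
        simp
      rw [abs_of_pos hppos]
      calc p * x ^ (p-1) * ((x^p)^n * gfun α (x^p))
          = p * (x ^ (p-1) * (x^p)^n) * gfun α (x^p) := by ring
        _ = p * gfun α (x^p) := by rw [hxpow]; ring
    · push_neg at hx1
      have h1 : x ^ p ∉ Set.Ioo (0:ℝ) 1 := by
        intro hmem
        exact absurd hmem.2 (not_lt.mpr (Real.one_le_rpow hx1 hppos.le))
      have h2 : x ∉ Set.Ioo (0:ℝ) 1 := fun hm => absurd hm.2 (not_lt.mpr hx1)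
      rw [hfdef, Set.indicator_of_notMem h1, Set.indicator_of_notMem h2]
      simp
  rw [hL] at h
  rw [integral_indicator measurableSet_Ioo, Measure.restrict_restrict measurableSet_Ioo,
    Set.inter_eq_left.mpr (Set.Ioo_subset_Ioi_self)] at h
  rw [hfdef, integral_indicator measurableSet_Ioo, Measure.restrict_restrict measurableSet_Ioo,
    Set.inter_eq_left.mpr (Set.Ioo_subset_Ioi_self)] at h
  rw [integral_const_mul] at h
  rw [← h, ← mul_assoc, mul_comm ((n:ℝ)+1) p, hpn, one_mul]

lemma keyB {α : ℝ} (hα : α ∈ Set.Ioo (0:ℝ) 1) :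
    Tendsto (fun n : ℕ => ((n:ℝ)+1) * ∫ x in Set.Ioo (0:ℝ) 1, x^n * gfun α x)
      atTop (nhds (1-α)) := by
  have hmain : Tendsto (fun n : ℕ => ∫ x in Set.Ioo (0:ℝ) 1, gfun α (x ^ (((n:ℝ)+1)⁻¹)))
      atTop (nhds (1-α)) := by
    have hint : ∫ x in Set.Ioo (0:ℝ) 1, (1-α) = 1 - α := by
      simp [Real.volume_Ioo]
    rw [← hint]
    apply tendsto_integral_of_dominated_convergence (fun _ => (1:ℝ))
    · intro n
      exact ((g_meas hα).comp
        ((Real.continuous_rpow_const (by positivity)).measurable)).aestronglyMeasurable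
    · exact (integrableOn_const_iff).mpr (Or.inr (by simp [Real.volume_Ioo]))
    · intro n
      rw [ae_restrict_iff' measurableSet_Ioo]
      apply ae_of_all
      intro x hx
      have hxp : x ^ (((n:ℝ)+1)⁻¹) ∈ Set.Ioo (0:ℝ) 1 :=
        ⟨Real.rpow_pos_of_pos hx.1 _, Real.rpow_lt_one hx.1.le hx.2 (by positivity)⟩
      have hb := g_bounds hα hxp
      rw [Real.norm_eq_abs, abs_le]
      exact ⟨by linarith [hb.1], hb.2⟩
    · rw [ae_restrict_iff' measurableSet_Ioo]
      apply ae_of_all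
      intro x hx
      have ht : Tendsto (fun n : ℕ => x ^ (((n:ℝ)+1)⁻¹)) atTop (nhds 1) := by
        have h0 : Tendsto (fun n : ℕ => Real.log x * ((n:ℝ)+1)⁻¹) atTop (nhds 0) := by
          have : Tendsto (fun n : ℕ => (((n:ℝ)+1))⁻¹) atTop (nhds 0) :=
            tendsto_inv_atTop_zero.comp
              (tendsto_atTop_add_const_right _ 1 tendsto_natCast_atTop_atTop)
          simpa using tendsto_const_nhds.mul this
        have h1 := (Real.continuous_exp.tendsto 0).comp h0
        rw [Real.exp_zero] at h1
        exact h1.congr (fun n => (Real.rpow_def_of_pos hx.1 _).symm)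
      have := ((g_cont hα).tendsto.comp ht)
      rwa [g_one hα] at this
  exact hmain.congr (fun n => (subst_eq n).symm)

end Aux

theorem stmt_18 (α : ℝ) (hα : α ∈ Set.Ioo (0:ℝ) 1) :
    Tendsto (fun j : ℕ =>
        (Real.Gamma ((j : ℝ) - 1 + α) / (Real.Gamma α * Real.Gamma ((j : ℝ) - 1)) *
          ∫ x in Set.Ioo (0:ℝ) 1, x ^ (j - 1) * (1 - α) / (1 - (1 - x) ^ (1 - α))) /
        ((1 - α) / Real.Gamma α * (j : ℝ) ^ (α - 1)))
      atTop (nhds 1) := by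
  obtain ⟨hα0, hα1⟩ := hα
  have hαne : (1:ℝ) - α ≠ 0 := sub_ne_zero.mpr (ne_of_gt (by linarith))
  have hΓα : 0 < Real.Gamma α := Real.Gamma_pos_of_pos hα0
  have hG := gamma_ratio ⟨hα0, hα1⟩
  have hM : Tendsto (fun j : ℕ => (j:ℝ)/((j:ℝ)-1)) atTop (nhds 1) := by
    have h := aux_div 0 (-1)
    exact h.congr (fun j => by rw [add_zero, ← sub_eq_add_neg])
  have hB2 : Tendsto (fun j : ℕ =>
      (((j-2:ℕ):ℝ)+1) * ∫ x in Set.Ioo (0:ℝ) 1, x^(j-2) * gfun α x) atTop (nhds (1-α)) :=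
    (keyB ⟨hα0, hα1⟩).comp (tendsto_sub_atTop_nat 2)
  have hprod := (hG.mul hM).mul (hB2.div tendsto_const_nhds hαne)
  rw [show (1:ℝ)*1*((1-α)/(1-α)) = 1 by field_simp] at hprod
  refine hprod.congr' ?_
  filter_upwards [eventually_ge_atTop 2] with j hj
  have hj2 : (2:ℝ) ≤ (j:ℝ) := by exact_mod_cast hj
  have hjpos : (0:ℝ) < (j:ℝ) := by linarith
  have hjne : (j:ℝ) ≠ 0 := hjpos.ne'
  have hx : (0:ℝ) < (j:ℝ) - 1 := by linarith
  have hΓb : 0 < Real.Gamma ((j:ℝ)-1) := Real.Gamma_pos_of_pos hx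
  have hjα : (0:ℝ) < (j:ℝ)^α := Real.rpow_pos_of_pos hjpos α
  have hjα1 : (0:ℝ) < (j:ℝ)^(α-1) := Real.rpow_pos_of_pos hjpos _
  have hcast : ((j-2:ℕ):ℝ) = (j:ℝ) - 2 := by
    push_cast [Nat.cast_sub hj]; ring
  have hIeq : (∫ x in Set.Ioo (0:ℝ) 1, x ^ (j - 1) * (1 - α) / (1 - (1 - x) ^ (1 - α)))
      = ∫ x in Set.Ioo (0:ℝ) 1, x^(j-2) * gfun α x := by
    apply setIntegral_congr_fun measurableSet_Ioo
    intro x hx'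
    have hpow : j - 1 = (j-2) + 1 := by omega
    dsimp only
    rw [hpow, pow_succ]
    simp only [gfun]
    ring
  simp only [Pi.div_apply]
  rw [hIeq, hcast]
  have hrpow : (j:ℝ)^α = (j:ℝ)^(α-1) * (j:ℝ) := by
    rw [← Real.rpow_add_one hjne (α-1)]; norm_num
  field_simp
  rw [hrpow]
  ring
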